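/- Let d > 0, y ∈ ℝ², and let v be a nonnegative harmonic function on the open disk B(y,d) ⊂ ℝ², continuous on the closed disk. Suppose there is z₀ with |z₀ − y| = d such that v(z₀) = 0, v is differentiable at z₀, and |∇v(z₀)| ≤ 1. Then v(y) ≤ 3d. -/

import Mathlib

open MeasureTheory Real Set
open scoped RealInnerProductSpace

noncomputable section

abbrev R2 : Type := EuclideanSpace ℝ (Fin 2)

def e (i : Fin 2) : R2 := EuclideanSpace.single i 1

/-- partial derivative in direction `e i` -/
def pd (i : Fin 2) (u : R2 → ℝ) (x : R2) : ℝ := fderiv ℝ u x (e i)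

/-- Euclidean Laplacian on `ℝ²` -/
def lap (u : R2 → ℝ) (x : R2) : ℝ := ∑ i, pd i (pd i u) x

/-- Euclidean gradient on `ℝ²` -/
def grad (u : R2 → ℝ) (x : R2) : R2 := ∑ i, pd i u x • e i

/-- unit circle parametrization -/
def circ (θ : ℝ) : R2 := Real.cos θ • e 0 + Real.sin θ • e 1

set_option maxHeartbeats 1000000
open Metric intervalIntegral

lemma normsq_complex (w : ℂ) : ‖w‖^2 = w.re^2 + w.im^2 := by
  rw [Complex.sq_norm, Complex.normSq_apply]; ring

lemma harnack_aux {d : ℝ} (hd : 0 < d) {F : ℂ → ℂ}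
    (hF : DifferentiableOn ℂ F (ball (0:ℂ) d))
    (hre : ∀ z ∈ ball (0:ℂ) d, 0 ≤ (F z).re) {x : ℂ} (hx : x ∈ ball (0:ℂ) d) :
    (d - ‖x‖) * (F 0).re ≤ (d + ‖x‖) * (F x).re := by
  have h0 : (0:ℂ) ∈ ball (0:ℂ) d := by simpa using hd
  have ha : 0 ≤ (F x).re := hre x hx
  have ha0 : 0 ≤ (F 0).re := hre 0 h0
  have hxd : ‖x‖ < d := by simpa [mem_ball, dist_eq_norm] using hx
  have hxn : 0 ≤ ‖x‖ := norm_nonneg x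
  rcases eq_or_lt_of_le ha0 with h|h
  · rw [← h, mul_zero]; positivity
  -- now (F 0).re > 0
  set c : ℂ := starRingEnd ℂ (F 0) with hc
  have hden : ∀ z ∈ ball (0:ℂ) d, F z + c ≠ 0 := by
    intro z hz hzero
    have h2 : (F z + c).re = (F z).re + (F 0).re := by simp [hc]
    rw [hzero] at h2
    simp at h2
    nlinarith [hre z hz]
  set h1 : ℂ → ℂ := fun z => (F z - F 0) / (F z + c) with hh1
  have hdiff : DifferentiableOn ℂ h1 (ball (0:ℂ) d) :=
    DifferentiableOn.div (hF.sub (differentiableOn_const _))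
      (hF.add (differentiableOn_const _)) hden
  have hb : ∀ z ∈ ball (0:ℂ) d, ‖h1 z‖ ≤ 1 := by
    intro z hz
    have haz := hre z hz
    rw [hh1]
    simp only [norm_div]
    rw [div_le_one_iff]
    left
    refine ⟨norm_pos_iff.mpr (hden z hz), ?_⟩
    have e1 : ‖F z - F 0‖^2 ≤ ‖F z + c‖^2 := by
      rw [normsq_complex, normsq_complex]
      simp only [Complex.add_re, Complex.add_im, Complex.sub_re, Complex.sub_im, hc,
        Complex.conj_re, Complex.conj_im]
      nlinarith
    nlinarith [norm_nonneg (F z - F 0), norm_nonneg (F z + c)]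
  have h10 : h1 0 = 0 := by simp [hh1]
  have hbs : ∀ z ∈ ball (0:ℂ) d, ‖h1 z‖ < 1 := by
    intro z hz
    rcases lt_or_ge ‖h1 z‖ 1 with h'|h'
    · exact h'
    exfalso
    have heq : ‖h1 z‖ = 1 := le_antisymm (hb z hz) h'
    have hmax : IsMaxOn (norm ∘ h1) (ball (0:ℂ) d) z := by
      intro w hw
      simp only [Function.comp]
      rw [heq]
      exact hb w hw
    have := Complex.norm_eqOn_of_isPreconnected_of_isMaxOn
      (convex_ball (0:ℂ) d).isPreconnected isOpen_ball hdiff hz hmax h0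
    simp only [Function.comp, Function.const, h10, norm_zero, heq] at this
    exact one_ne_zero this.symm
  have hmaps : MapsTo h1 (ball (0:ℂ) d) (ball (h1 0) 1) := by
    intro z hz
    rw [h10, mem_ball, dist_eq_norm, sub_zero]
    exact hbs z hz
  have hs := Complex.dist_le_div_mul_dist_of_mapsTo_ball hdiff (hmaps.mono_right ball_subset_closedBall) hx
  rw [h10, dist_eq_norm, sub_zero, dist_eq_norm, sub_zero] at hs
  have hkey : d * ‖F x - F 0‖ ≤ ‖x‖ * ‖F x + c‖ := by
    have e0 : ‖F x - F 0‖ = ‖h1 x‖ * ‖F x + c‖ := by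
      rw [hh1]
      simp only [norm_div]
      rw [div_mul_cancel₀]
      exact norm_ne_zero_iff.mpr (hden x hx)
    rw [e0]
    calc d * (‖h1 x‖ * ‖F x + c‖) ≤ d * ((1/d * ‖x‖) * ‖F x + c‖) := by
          apply mul_le_mul_of_nonneg_left _ hd.le
          apply mul_le_mul_of_nonneg_right hs (norm_nonneg _)
      _ = ‖x‖ * ‖F x + c‖ := by field_simp
  have hsq : (d * ‖F x - F 0‖)^2 ≤ (‖x‖ * ‖F x + c‖)^2 := by
    apply pow_le_pow_left₀ (by positivity) hkey
  have e2 : ‖F x - F 0‖^2 = ((F x).re - (F 0).re)^2 + ((F x).im - (F 0).im)^2 := by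
    rw [normsq_complex]; simp [Complex.sub_re, Complex.sub_im]
  have e3 : ‖F x + c‖^2 = ((F x).re + (F 0).re)^2 + ((F x).im - (F 0).im)^2 := by
    rw [normsq_complex]
    simp only [Complex.add_re, Complex.add_im, hc, Complex.conj_re, Complex.conj_im]
    ring
  rw [mul_pow, mul_pow, e2, e3] at hsq
  have ht := sq_nonneg ((F x).im - (F 0).im)
  have hX2 : ‖x‖^2 ≤ d^2 := by nlinarith
  have key2 : (d*((F x).re-(F 0).re))^2 ≤ (‖x‖*((F x).re+(F 0).re))^2 := by
    nlinarith [mul_le_mul_of_nonneg_right hX2 ht]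
  have habs : d*((F 0).re-(F x).re) ≤ ‖x‖*((F x).re+(F 0).re) := by
    nlinarith [sq_nonneg (d*((F x).re-(F 0).re) + ‖x‖*((F x).re+(F 0).re)),
      mul_nonneg hxn (add_nonneg ha ha0), key2]
  nlinarith [habs]

lemma mem_ball_zero_of_sq {d : ℝ} (p : ℂ) (A B : ℝ) (hA : |p.re| ≤ A) (hB : |p.im| ≤ B)
    (h : A^2 + B^2 < d^2) (hd : 0 < d) : p ∈ ball (0:ℂ) d := by
  rw [mem_ball_zero_iff]
  have h1 : ‖p‖^2 < d^2 := by
    rw [normsq_complex]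
    nlinarith [abs_nonneg p.re, abs_nonneg p.im, sq_abs p.re, sq_abs p.im]
  nlinarith [norm_nonneg p]

lemma abs_le_of_mem_uIcc {x a b M : ℝ} (h : x ∈ Set.uIcc a b) (ha : |a| ≤ M) (hb : |b| ≤ M) :
    |x| ≤ M := by
  rw [Set.mem_uIcc] at h
  rcases h with ⟨h1,h2⟩|⟨h1,h2⟩ <;> rw [abs_le] at * <;> constructor <;> linarith

lemma primitive_hasDerivAt {d : ℝ} {g : ℂ → ℂ} (hg : DifferentiableOn ℂ g (ball (0:ℂ) d))
    {z : ℂ} (hz : z ∈ ball (0:ℂ) d) :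
    HasDerivAt (fun p : ℂ => (∫ x in (0:ℝ)..p.re, g x) +
      Complex.I * ∫ t in (0:ℝ)..p.im, g (p.re + t * Complex.I)) (g z) z := by
  have hzn : ‖z‖ < d := by simpa [mem_ball_zero_iff] using hz
  have hd : 0 < d := lt_of_le_of_lt (norm_nonneg z) hzn
  have hgc : ContinuousOn g (ball (0:ℂ) d) := hg.continuousOn
  set F : ℂ → ℂ := fun p : ℂ => (∫ x in (0:ℝ)..p.re, g x) +
      Complex.I * ∫ t in (0:ℝ)..p.im, g (p.re + t * Complex.I) with hF
  rw [hasDerivAt_iff_isLittleO, Asymptotics.isLittleO_iff]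
  intro c hc
  have hcont : ContinuousAt g z := hgc.continuousAt (isOpen_ball.mem_nhds hz)
  rw [Metric.continuousAt_iff] at hcont
  obtain ⟨δc, hδc, hδcball⟩ := hcont (c/2) (by positivity)
  set δ : ℝ := min (δc/2) ((d - ‖z‖)/2) with hδ
  have hδpos : 0 < δ := by
    apply lt_min (by positivity)
    have : 0 < d - ‖z‖ := by linarith
    positivity
  rw [Filter.eventually_iff_exists_mem]
  refine ⟨Metric.ball z δ, Metric.ball_mem_nhds z hδpos, ?_⟩
  intro w hw
  set u : ℂ := w - z with hu
  have hun : ‖u‖ < δ := by simpa [hu, dist_eq_norm] using hw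
  have hun0 : 0 ≤ ‖u‖ := norm_nonneg u
  have hδ1 : 2 * δ ≤ δc := by rw [hδ]; have := min_le_left (δc/2) ((d - ‖z‖)/2); linarith
  have hδ2 : 2 * δ ≤ d - ‖z‖ := by rw [hδ]; have := min_le_right (δc/2) ((d - ‖z‖)/2); linarith
  have hure : |u.re| ≤ ‖u‖ := Complex.abs_re_le_norm u
  have huim : |u.im| ≤ ‖u‖ := Complex.abs_im_le_norm u
  have hzre : |z.re| ≤ ‖z‖ := Complex.abs_re_le_norm z
  have hzim : |z.im| ≤ ‖z‖ := Complex.abs_im_le_norm z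
  have hzsq : z.re^2 + z.im^2 = ‖z‖^2 := (normsq_complex z).symm
  have hwre : |w.re| ≤ |z.re| + ‖u‖ := by
    have : w.re = z.re + u.re := by rw [hu]; simp
    rw [this]
    calc |z.re + u.re| ≤ |z.re| + |u.re| := abs_add_le _ _
      _ ≤ |z.re| + ‖u‖ := by linarith
  have hwim : |w.im| ≤ |z.im| + ‖u‖ := by
    have : w.im = z.im + u.im := by rw [hu]; simp
    rw [this]
    calc |z.im + u.im| ≤ |z.im| + |u.im| := abs_add_le _ _
      _ ≤ |z.im| + ‖u‖ := by linarith
  -- key square bounds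
  have hq1 : (|z.re| + ‖u‖)^2 + z.im^2 < d^2 := by nlinarith [sq_abs z.re, sq_abs z.im, abs_nonneg z.re, abs_nonneg z.im]
  have hq2 : (|z.re| + ‖u‖)^2 + (|z.im| + ‖u‖)^2 < d^2 := by nlinarith [sq_abs z.re, sq_abs z.im, abs_nonneg z.re, abs_nonneg z.im]
  -- integrability lemmas
  have int_horiz : ∀ a b h : ℝ, (∀ x ∈ Set.uIcc a b, (↑x + (h:ℂ)*Complex.I) ∈ ball (0:ℂ) d) →
      IntervalIntegrable (fun x : ℝ => g (↑x + (h:ℂ)*Complex.I)) MeasureTheory.volume a b := by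
    intro a b h hmem
    apply ContinuousOn.intervalIntegrable
    exact hgc.comp (Continuous.continuousOn (Complex.continuous_ofReal.add continuous_const)) hmem
  have int_vert : ∀ a b r : ℝ, (∀ t ∈ Set.uIcc a b, ((r:ℂ) + (t:ℂ)*Complex.I) ∈ ball (0:ℂ) d) →
      IntervalIntegrable (fun t : ℝ => g (↑r + (t:ℂ)*Complex.I)) MeasureTheory.volume a b := by
    intro a b r hmem
    apply ContinuousOn.intervalIntegrable
    exact hgc.comp (Continuous.continuousOn (continuous_const.add (Complex.continuous_ofReal.mul continuous_const))) hmem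
  have int_axis : ∀ a b : ℝ, (∀ x ∈ Set.uIcc a b, ((x:ℂ)) ∈ ball (0:ℂ) d) →
      IntervalIntegrable (fun x : ℝ => g ↑x) MeasureTheory.volume a b := by
    intro a b hmem
    apply ContinuousOn.intervalIntegrable
    exact hgc.comp Complex.continuous_ofReal.continuousOn hmem
  have hI1 : IntervalIntegrable (fun x : ℝ => g ↑x) MeasureTheory.volume 0 z.re := by
    apply int_axis; intro x hx
    exact mem_ball_zero_of_sq _ (|z.re|) 0
      (by simpa using abs_le_of_mem_uIcc hx (by simp) le_rfl) (by simp)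
      (by nlinarith [sq_abs z.re, sq_nonneg z.im, norm_nonneg z]) hd
  have hI2 : IntervalIntegrable (fun x : ℝ => g ↑x) MeasureTheory.volume z.re w.re := by
    apply int_axis; intro x hx
    exact mem_ball_zero_of_sq _ (|z.re| + ‖u‖) 0
      (by simpa using abs_le_of_mem_uIcc hx (by linarith) hwre) (by simp)
      (by nlinarith [sq_nonneg z.im]) hd
  have hI3 : IntervalIntegrable (fun t : ℝ => g (↑w.re + (t:ℂ)*Complex.I)) MeasureTheory.volume 0 z.im := by
    apply int_vert; intro t ht
    exact mem_ball_zero_of_sq _ (|z.re| + ‖u‖) (|z.im|)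
      (by simpa using hwre) (by simpa using abs_le_of_mem_uIcc ht (by simp) le_rfl)
      (by nlinarith [sq_abs z.im]) hd
  have hI4 : IntervalIntegrable (fun t : ℝ => g (↑w.re + (t:ℂ)*Complex.I)) MeasureTheory.volume z.im w.im := by
    apply int_vert; intro t ht
    exact mem_ball_zero_of_sq _ (|z.re| + ‖u‖) (|z.im| + ‖u‖)
      (by simpa using hwre)
      (by simpa using abs_le_of_mem_uIcc ht (by linarith [abs_nonneg z.im]) hwim)
      hq2 hd
  have hI5 : IntervalIntegrable (fun t : ℝ => g (↑z.re + (t:ℂ)*Complex.I)) MeasureTheory.volume 0 z.im := by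
    apply int_vert; intro t ht
    exact mem_ball_zero_of_sq _ (|z.re|) (|z.im|)
      (by simp) (by simpa using abs_le_of_mem_uIcc ht (by simp) le_rfl)
      (by nlinarith [sq_abs z.re, sq_abs z.im, norm_nonneg z]) hd
  have hI6 : IntervalIntegrable (fun x : ℝ => g (↑x + (z.im:ℂ)*Complex.I)) MeasureTheory.volume z.re w.re := by
    apply int_horiz; intro x hx
    exact mem_ball_zero_of_sq _ (|z.re| + ‖u‖) (|z.im|)
      (by simpa using abs_le_of_mem_uIcc hx (by linarith) hwre)
      (by simpa using abs_le_of_mem_uIcc (by simp : z.im ∈ Set.uIcc z.im z.im) le_rfl le_rfl)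
      (by nlinarith [sq_abs z.im]) hd
  -- rectangle theorem
  have hsub : Set.uIcc (z.re:ℝ) w.re ×ℂ Set.uIcc 0 z.im ⊆ ball (0:ℂ) d := by
    intro p hp
    rw [Complex.mem_reProdIm] at hp
    exact mem_ball_zero_of_sq p (|z.re| + ‖u‖) (|z.im|)
      (abs_le_of_mem_uIcc hp.1 (by linarith) hwre)
      (abs_le_of_mem_uIcc hp.2 (by simp) le_rfl)
      (by nlinarith [sq_abs z.im]) hd
  have hrect := Complex.integral_boundary_rect_eq_zero_of_differentiableOn g (z.re : ℂ)
    (↑w.re + ↑z.im * Complex.I) (by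
      apply hg.mono
      convert hsub using 2 <;> simp)
  simp only [Complex.ofReal_re, Complex.ofReal_im, Complex.add_re, Complex.add_im,
    Complex.mul_re, Complex.mul_im, Complex.I_re, Complex.I_im, smul_eq_mul,
    Complex.ofReal_zero, zero_mul, mul_zero, mul_one, one_mul, sub_zero, zero_add, add_zero] at hrect
  -- hrect should now say:
  -- (∫ x in z.re..w.re, g x) - (∫ x in z.re..w.re, g (x + z.im I)) + I*(∫ t in 0..z.im, g (w.re + tI)) - I*(∫ t in 0..z.im, g (z.re+tI)) = 0
  -- split the two coordinate integrals
  have e1 : (∫ x in (0:ℝ)..w.re, g ↑x) = (∫ x in (0:ℝ)..z.re, g ↑x) + ∫ x in z.re..w.re, g ↑x :=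
    (integral_add_adjacent_intervals hI1 hI2).symm
  have e2 : (∫ t in (0:ℝ)..w.im, g (↑w.re + (t:ℂ)*Complex.I)) =
      (∫ t in (0:ℝ)..z.im, g (↑w.re + (t:ℂ)*Complex.I)) +
      ∫ t in z.im..w.im, g (↑w.re + (t:ℂ)*Complex.I) :=
    (integral_add_adjacent_intervals hI3 hI4).symm
  have key : F w - F z = (∫ x in z.re..w.re, g (↑x + (z.im:ℂ)*Complex.I)) +
      Complex.I * ∫ t in z.im..w.im, g (↑w.re + (t:ℂ)*Complex.I) := by
    simp only [hF]
    rw [e1, e2]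
    linear_combination hrect
  -- subtract the constant
  have hconst1 : (∫ _x in z.re..w.re, g z) = ((w.re - z.re : ℝ) : ℂ) * g z := by
    rw [intervalIntegral.integral_const, Complex.real_smul]
  have hconst2 : (∫ _t in z.im..w.im, g z) = ((w.im - z.im : ℝ) : ℂ) * g z := by
    rw [intervalIntegral.integral_const, Complex.real_smul]
  have hIc1 : IntervalIntegrable (fun _x : ℝ => g z) MeasureTheory.volume z.re w.re :=
    intervalIntegrable_const
  have hIc2 : IntervalIntegrable (fun _t : ℝ => g z) MeasureTheory.volume z.im w.im :=
    intervalIntegrable_const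
  have hwz : w - z = ((w.re - z.re : ℝ) : ℂ) + ((w.im - z.im : ℝ) : ℂ) * Complex.I := by
    simp [Complex.ext_iff]
  have key2 : F w - F z - (w - z) • g z =
      (∫ x in z.re..w.re, (g (↑x + (z.im:ℂ)*Complex.I) - g z)) +
      Complex.I * ∫ t in z.im..w.im, (g (↑w.re + (t:ℂ)*Complex.I) - g z) := by
    have hsm : (w - z) • g z = (w - z) * g z := rfl
    rw [intervalIntegral.integral_sub hI6 hIc1, intervalIntegral.integral_sub hI4 hIc2,
      hconst1, hconst2, hsm, key, hwz]
    ring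
  rw [key2]
  -- norm estimates
  have n1 : ‖∫ x in z.re..w.re, (g (↑x + (z.im:ℂ)*Complex.I) - g z)‖ ≤ (c/2) * |w.re - z.re| := by
    apply intervalIntegral.norm_integral_le_of_norm_le_const
    intro x hx
    have hx' : x ∈ Set.uIcc z.re w.re := Set.Ioc_subset_Icc_self hx
    have hd1 : dist (↑x + (z.im:ℂ)*Complex.I) z < δc := by
      rw [dist_eq_norm]
      have : (↑x + (z.im:ℂ)*Complex.I) - z = ((x - z.re : ℝ) : ℂ) := by
        simp [Complex.ext_iff]
      rw [this]
      have h1 : |x - z.re| ≤ |w.re - z.re| := by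
        rw [Set.mem_uIcc] at hx'
        rcases hx' with ⟨ha,hb⟩|⟨ha,hb⟩ <;> rw [abs_le] <;> constructor <;>
          cases' abs_cases (w.re - z.re) with h h <;> linarith [h.1, h.2, abs_nonneg (w.re - z.re)]
      have h2 : |w.re - z.re| = |u.re| := by rw [hu]; simp
      rw [Complex.norm_real, Real.norm_eq_abs]
      linarith
    have := hδcball hd1
    rw [dist_eq_norm] at this
    linarith
  have n2 : ‖∫ t in z.im..w.im, (g (↑w.re + (t:ℂ)*Complex.I) - g z)‖ ≤ (c/2) * |w.im - z.im| := by
    apply intervalIntegral.norm_integral_le_of_norm_le_const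
    intro t ht
    have ht' : t ∈ Set.uIcc z.im w.im := Set.Ioc_subset_Icc_self ht
    have hd1 : dist (↑w.re + (t:ℂ)*Complex.I) z < δc := by
      rw [dist_eq_norm]
      have hrw : (↑w.re + (t:ℂ)*Complex.I) - z = ((w.re - z.re : ℝ) : ℂ) + ((t - z.im : ℝ):ℂ) * Complex.I := by
        simp [Complex.ext_iff]
      have h1 : |t - z.im| ≤ |w.im - z.im| := by
        rw [Set.mem_uIcc] at ht'
        rcases ht' with ⟨ha,hb⟩|⟨ha,hb⟩ <;> rw [abs_le] <;> constructor <;>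
          cases' abs_cases (w.im - z.im) with h h <;> linarith [h.1, h.2, abs_nonneg (w.im - z.im)]
      have h2 : |w.im - z.im| = |u.im| := by rw [hu]; simp
      have h3 : |w.re - z.re| = |u.re| := by rw [hu]; simp
      have hnsq : ‖(↑w.re + (t:ℂ)*Complex.I) - z‖^2 = (w.re - z.re)^2 + (t - z.im)^2 := by
        rw [hrw, normsq_complex]
        simp
      have hb2 : ‖(↑w.re + (t:ℂ)*Complex.I) - z‖^2 ≤ 2 * ‖u‖^2 := by
        rw [hnsq]
        nlinarith [sq_abs (w.re - z.re), sq_abs (t - z.im), sq_abs u.re, sq_abs u.im,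
          abs_nonneg (t - z.im), abs_nonneg (w.re - z.re), abs_nonneg u.re, abs_nonneg u.im]
      nlinarith [norm_nonneg ((↑w.re + (t:ℂ)*Complex.I) - z), hun, hδ1, hδc, hun0]
    have := hδcball hd1
    rw [dist_eq_norm] at this
    linarith
  -- final bound
  have hfin : ‖(∫ x in z.re..w.re, (g (↑x + (z.im:ℂ)*Complex.I) - g z)) +
      Complex.I * ∫ t in z.im..w.im, (g (↑w.re + (t:ℂ)*Complex.I) - g z)‖ ≤
      (c/2) * |w.re - z.re| + (c/2) * |w.im - z.im| := by
    calc ‖(∫ x in z.re..w.re, (g (↑x + (z.im:ℂ)*Complex.I) - g z)) +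
        Complex.I * ∫ t in z.im..w.im, (g (↑w.re + (t:ℂ)*Complex.I) - g z)‖
        ≤ ‖∫ x in z.re..w.re, (g (↑x + (z.im:ℂ)*Complex.I) - g z)‖ +
          ‖Complex.I * ∫ t in z.im..w.im, (g (↑w.re + (t:ℂ)*Complex.I) - g z)‖ := norm_add_le _ _
      _ ≤ (c/2) * |w.re - z.re| + (c/2) * |w.im - z.im| := by
          rw [norm_mul, Complex.norm_I, one_mul]
          linarith
  refine le_trans hfin ?_
  have h2 : |w.re - z.re| = |u.re| := by rw [hu]; simp
  have h3 : |w.im - z.im| = |u.im| := by rw [hu]; simp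
  rw [h2, h3]
  have : ‖w - z‖ = ‖u‖ := by rw [hu]
  rw [this]
  nlinarith

lemma fderiv_eval {E : Type*} [NormedAddCommGroup E] [NormedSpace ℝ E]
    (f : E → E →L[ℝ] ℝ) (x : E) (h : DifferentiableAt ℝ f x) (c w : E) :
    fderiv ℝ (fun p => f p c) x w = fderiv ℝ f x w c := by
  have h1 := h.hasFDerivAt.clm_apply (hasFDerivAt_const c x)
  rw [h1.fderiv]
  simp

lemma cauchy_riemann {d : ℝ} {u : ℂ → ℝ} (hu : ContDiffOn ℝ 2 u (ball (0:ℂ) d))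
    (hlap : ∀ z ∈ ball (0:ℂ) d,
      fderiv ℝ (fun p => fderiv ℝ u p 1) z 1 +
      fderiv ℝ (fun p => fderiv ℝ u p Complex.I) z Complex.I = 0) :
    DifferentiableOn ℂ (fun p => (↑(fderiv ℝ u p 1) : ℂ) - ↑(fderiv ℝ u p Complex.I) * Complex.I)
      (ball (0:ℂ) d) := by
  intro z hz
  have hmem : ball (0:ℂ) d ∈ nhds z := isOpen_ball.mem_nhds hz
  have hCA : ContDiffAt ℝ 2 u z := hu.contDiffAt hmem
  have hf'diff : DifferentiableAt ℝ (fderiv ℝ u) z := by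
    have h2 := hCA.fderiv_right (m := 1) (by norm_num)
    exact h2.differentiableAt (by norm_num)
  set f'' := fderiv ℝ (fderiv ℝ u) z with hf''
  have hev : ∀ᶠ p in nhds z, HasFDerivAt u (fderiv ℝ u p) p := by
    filter_upwards [hmem] with p hp
    exact ((hu.contDiffAt (isOpen_ball.mem_nhds hp)).differentiableAt
      (by norm_num)).hasFDerivAt
  have hsymm : ∀ a b : ℂ, f'' a b = f'' b a := fun a b =>
    second_derivative_symmetric_of_eventually hev hf'diff.hasFDerivAt a b
  have htr : f'' 1 1 + f'' Complex.I Complex.I = 0 := by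
    have := hlap z hz
    rwa [fderiv_eval _ _ hf'diff, fderiv_eval _ _ hf'diff] at this
  -- build the real derivative of g
  have h1 : HasFDerivAt (fun p => fderiv ℝ u p 1)
      (((fderiv ℝ u z).comp (0 : ℂ →L[ℝ] ℂ)) + f''.flip 1) z :=
    hf'diff.hasFDerivAt.clm_apply (hasFDerivAt_const 1 z)
  have hI : HasFDerivAt (fun p => fderiv ℝ u p Complex.I)
      (((fderiv ℝ u z).comp (0 : ℂ →L[ℝ] ℂ)) + f''.flip Complex.I) z :=
    hf'diff.hasFDerivAt.clm_apply (hasFDerivAt_const Complex.I z)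
  have h1c : HasFDerivAt (fun p => (↑(fderiv ℝ u p 1) : ℂ))
      (Complex.ofRealCLM.comp ((((fderiv ℝ u z).comp (0 : ℂ →L[ℝ] ℂ)) + f''.flip 1))) z :=
    Complex.ofRealCLM.hasFDerivAt.comp z h1
  have hIc : HasFDerivAt (fun p => (↑(fderiv ℝ u p Complex.I) : ℂ))
      (Complex.ofRealCLM.comp ((((fderiv ℝ u z).comp (0 : ℂ →L[ℝ] ℂ)) + f''.flip Complex.I))) z :=
    Complex.ofRealCLM.hasFDerivAt.comp z hI
  have hg : HasFDerivAt (fun p => (↑(fderiv ℝ u p 1) : ℂ) - ↑(fderiv ℝ u p Complex.I) * Complex.I)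
      ((Complex.ofRealCLM.comp ((((fderiv ℝ u z).comp (0 : ℂ →L[ℝ] ℂ)) + f''.flip 1))) -
        (Complex.I • (Complex.ofRealCLM.comp ((((fderiv ℝ u z).comp (0 : ℂ →L[ℝ] ℂ)) + f''.flip Complex.I))))) z := by
    exact h1c.sub (hIc.mul_const Complex.I)
  set L := ((Complex.ofRealCLM.comp ((((fderiv ℝ u z).comp (0 : ℂ →L[ℝ] ℂ)) + f''.flip 1))) -
        (Complex.I • (Complex.ofRealCLM.comp ((((fderiv ℝ u z).comp (0 : ℂ →L[ℝ] ℂ)) + f''.flip Complex.I))))) with hL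
  have hL1 : L 1 = (↑(f'' 1 1) : ℂ) - Complex.I * ↑(f'' 1 Complex.I) := by
    simp [hL, smul_eq_mul]
  have hLI : L Complex.I = (↑(f'' Complex.I 1) : ℂ) - Complex.I * ↑(f'' Complex.I Complex.I) := by
    simp [hL, smul_eq_mul]
  have happ : ∀ w : ℂ, L w = w * L 1 := by
    intro w
    have hw : w = w.re • (1:ℂ) + w.im • Complex.I := by simp [Complex.ext_iff]
    conv_lhs => rw [hw]
    rw [map_add, _root_.map_smul, _root_.map_smul, hL1, hLI, hsymm Complex.I 1]
    have hii : f'' Complex.I Complex.I = -(f'' 1 1) := by linarith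
    rw [hii]
    apply Complex.ext <;>
      simp [Complex.mul_re, Complex.mul_im, Complex.add_re, Complex.add_im,
        Complex.sub_re, Complex.sub_im, Complex.smul_re, Complex.smul_im] <;> ring
  have hL' : (((L 1) • (ContinuousLinearMap.id ℂ ℂ)).restrictScalars ℝ) = L := by
    apply ContinuousLinearMap.ext
    intro w
    simp [happ w, mul_comm]
  have : HasFDerivAt (𝕜 := ℂ)
      (fun p => (↑(fderiv ℝ u p 1) : ℂ) - ↑(fderiv ℝ u p Complex.I) * Complex.I)
      ((L 1) • (ContinuousLinearMap.id ℂ ℂ)) z :=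
    hasFDerivAt_of_restrictScalars ℝ hg hL'
  exact this.differentiableAt.differentiableWithinAt

lemma complex_side {d : ℝ} (hd : 0 < d) {u : ℂ → ℝ}
    (hu : ContDiffOn ℝ 2 u (ball (0:ℂ) d))
    (hlap : ∀ z ∈ ball (0:ℂ) d,
      fderiv ℝ (fun p => fderiv ℝ u p 1) z 1 +
      fderiv ℝ (fun p => fderiv ℝ u p Complex.I) z Complex.I = 0)
    (hnn : ∀ z ∈ ball (0:ℂ) d, 0 ≤ u z)
    {x : ℂ} (hx : x ∈ ball (0:ℂ) d) :
    (d - ‖x‖) * u 0 ≤ (d + ‖x‖) * u x := by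
  have h0 : (0:ℂ) ∈ ball (0:ℂ) d := by simpa using hd
  set g : ℂ → ℂ := fun p => (↑(fderiv ℝ u p 1) : ℂ) - ↑(fderiv ℝ u p Complex.I) * Complex.I
    with hgdef
  have hCR : DifferentiableOn ℂ g (ball (0:ℂ) d) := cauchy_riemann hu hlap
  set F0 : ℂ → ℂ := fun p : ℂ => (∫ x in (0:ℝ)..p.re, g x) +
      Complex.I * ∫ t in (0:ℝ)..p.im, g (p.re + t * Complex.I) with hF0
  have hder : ∀ z ∈ ball (0:ℂ) d, HasDerivAt F0 (g z) z := fun z hz =>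
    primitive_hasDerivAt hCR hz
  have hFdiff : DifferentiableOn ℂ F0 (ball (0:ℂ) d) := fun z hz =>
    (hder z hz).differentiableAt.differentiableWithinAt
  -- the real part of F0 minus u has zero derivative
  have hzero : ∀ z ∈ ball (0:ℂ) d,
      HasFDerivWithinAt (fun p => (F0 p).re - u p) (0 : ℂ →L[ℝ] ℝ) (ball (0:ℂ) d) z := by
    intro z hz
    have hudiff : DifferentiableAt ℝ u z :=
      (hu.contDiffAt (isOpen_ball.mem_nhds hz)).differentiableAt (by norm_num)
    have hFd : HasFDerivAt F0
        ((ContinuousLinearMap.smulRight (1 : ℂ →L[ℂ] ℂ) (g z)).restrictScalars ℝ) z :=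
      ((hder z hz).hasFDerivAt).restrictScalars ℝ
    have hre : HasFDerivAt (fun p => (F0 p).re)
        (Complex.reCLM.comp ((ContinuousLinearMap.smulRight (1 : ℂ →L[ℂ] ℂ) (g z)).restrictScalars ℝ)) z :=
      Complex.reCLM.hasFDerivAt.comp z hFd
    have hsub := hre.sub hudiff.hasFDerivAt
    have hD : (Complex.reCLM.comp ((ContinuousLinearMap.smulRight (1 : ℂ →L[ℂ] ℂ) (g z)).restrictScalars ℝ))
        - fderiv ℝ u z = 0 := by
      apply ContinuousLinearMap.ext
      intro w
      have hw : w = w.re • (1:ℂ) + w.im • Complex.I := by simp [Complex.ext_iff]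
      rw [ContinuousLinearMap.sub_apply, ContinuousLinearMap.zero_apply]
      conv_lhs => rw [hw]
      rw [map_add, _root_.map_smul, _root_.map_smul, map_add, _root_.map_smul, _root_.map_smul]
      have hg1 : ((1:ℂ) * g z).re = fderiv ℝ u z 1 := by simp [hgdef]
      have hg2 : (Complex.I * g z).re = fderiv ℝ u z Complex.I := by
        simp [hgdef, Complex.mul_re, Complex.mul_im, Complex.sub_re, Complex.sub_im]
      simp only [ContinuousLinearMap.coe_comp', Function.comp_apply,
        ContinuousLinearMap.coe_restrictScalars', ContinuousLinearMap.smulRight_apply,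
        ContinuousLinearMap.one_apply, Complex.reCLM_apply, smul_eq_mul]
      rw [hg1, hg2]
      ring
    rw [← hD]
    exact hsub.hasFDerivWithinAt
  have hconst : ∀ z ∈ ball (0:ℂ) d, (F0 z).re - u z = (F0 0).re - u 0 := by
    intro z hz
    have := Convex.norm_image_sub_le_of_norm_hasFDerivWithin_le (C := 0)
      hzero (fun p _ => by simp) (convex_ball (0:ℂ) d) h0 hz
    rw [zero_mul] at this
    have h3 := le_antisymm this (norm_nonneg _)
    rw [norm_eq_zero, sub_eq_zero] at h3
    linarith
  set F : ℂ → ℂ := fun p => F0 p - ↑((F0 0).re - u 0) with hF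
  have hFdiff' : DifferentiableOn ℂ F (ball (0:ℂ) d) :=
    hFdiff.sub (differentiableOn_const _)
  have hFre : ∀ z ∈ ball (0:ℂ) d, (F z).re = u z := by
    intro z hz
    rw [hF]
    simp only [Complex.sub_re, Complex.ofReal_re]
    have := hconst z hz
    linarith
  have := harnack_aux hd hFdiff' (fun z hz => by rw [hFre z hz]; exact hnn z hz) hx
  rwa [hFre 0 h0, hFre x hx] at this

/-- A nonnegative harmonic function whose gradient is at most one at a boundary zero
is at most `3 d` at the center. -/
theorem stmt9 (d : ℝ) (hd : 0 < d) (y : R2) (v : R2 → ℝ)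
    (hcont : ContinuousOn v (Metric.closedBall y d))
    (hreg : ContDiffOn ℝ 2 v (Metric.ball y d))
    (hharm : ∀ x ∈ Metric.ball y d, lap v x = 0)
    (hnonneg : ∀ x ∈ Metric.ball y d, 0 ≤ v x)
    (z₀ : R2) (hz₀ : ‖z₀ - y‖ = d) (hv0 : v z₀ = 0)
    (hdiff : DifferentiableAt ℝ v z₀) (hgrad : ‖grad v z₀‖ ≤ 1) :
    v y ≤ 3 * d := by
  classical
  set A := Complex.isometryOfOrthonormal (EuclideanSpace.basisFun (Fin 2) ℝ) with hAdef
  have hAapp : ∀ z : ℂ, A z = z.re • e 0 + z.im • e 1 := by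
    intro z
    rw [hAdef, Complex.isometryOfOrthonormal_apply]
    simp [e, EuclideanSpace.basisFun_apply]
  set Φ : ℂ →L[ℝ] R2 := A.toLinearIsometry.toContinuousLinearMap with hΦdef
  have hΦA : ∀ z : ℂ, Φ z = A z := fun z => rfl
  have hΦnorm : ∀ z : ℂ, ‖Φ z‖ = ‖z‖ := fun z => by rw [hΦA]; exact A.norm_map z
  set u : ℂ → ℝ := fun z => v (y + Φ z) with hudef
  have hφd : ∀ z : ℂ, HasFDerivAt (fun w : ℂ => y + Φ w) Φ z := fun z =>
    Φ.hasFDerivAt.const_add y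
  have hmaps : ∀ z ∈ Metric.ball (0:ℂ) d, y + Φ z ∈ Metric.ball y d := by
    intro z hz
    rw [Metric.mem_ball, dist_eq_norm, add_sub_cancel_left, hΦnorm]
    simpa [Metric.mem_ball, dist_eq_norm] using hz
  have hu : ContDiffOn ℝ 2 u (Metric.ball (0:ℂ) d) := by
    apply hreg.comp ((contDiff_const.add Φ.contDiff).contDiffOn)
    intro z hz
    exact hmaps z hz
  have hnnu : ∀ z ∈ Metric.ball (0:ℂ) d, 0 ≤ u z := fun z hz => hnonneg _ (hmaps z hz)
  have hdu_eq : ∀ p ∈ Metric.ball (0:ℂ) d,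
      fderiv ℝ u p = (fderiv ℝ v (y + Φ p)).comp Φ := by
    intro p hp
    have hv : DifferentiableAt ℝ v (y + Φ p) :=
      (hreg.contDiffAt (Metric.isOpen_ball.mem_nhds (hmaps p hp))).differentiableAt (by norm_num)
    exact (hv.hasFDerivAt.comp p (hφd p)).fderiv
  have hΦ1 : Φ 1 = e 0 := by rw [hΦA, hAapp]; simp
  have hΦI : Φ Complex.I = e 1 := by rw [hΦA, hAapp]; simp
  -- laplacian transfer
  have hlapu : ∀ z ∈ Metric.ball (0:ℂ) d,
      fderiv ℝ (fun p => fderiv ℝ u p 1) z 1 +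
      fderiv ℝ (fun p => fderiv ℝ u p Complex.I) z Complex.I = 0 := by
    intro z hz
    have hx : y + Φ z ∈ Metric.ball y d := hmaps z hz
    have hvd2 : DifferentiableAt ℝ (fderiv ℝ v) (y + Φ z) :=
      ((hreg.contDiffAt (Metric.isOpen_ball.mem_nhds hx)).fderiv_right
        (m := 1) (by norm_num)).differentiableAt (by norm_num)
    have hcomp : ∀ c : ℂ, fderiv ℝ (fun p => fderiv ℝ u p c) z =
        ((fderiv ℝ (fun q => fderiv ℝ v q (Φ c)) (y + Φ z)).comp Φ) := by
      intro c
      have hev : (fun p => fderiv ℝ u p c) =ᶠ[nhds z]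
          (fun p => fderiv ℝ v (y + Φ p) (Φ c)) := by
        filter_upwards [Metric.isOpen_ball.mem_nhds hz] with p hp
        rw [hdu_eq p hp]
        rfl
      rw [hev.fderiv_eq]
      have hψ : DifferentiableAt ℝ (fun q : R2 => fderiv ℝ v q (Φ c)) (y + Φ z) :=
        hvd2.clm_apply (differentiableAt_const _)
      exact (hψ.hasFDerivAt.comp z (hφd z)).fderiv
    have h1 : fderiv ℝ (fun p => fderiv ℝ u p 1) z 1 =
        fderiv ℝ (fderiv ℝ v) (y + Φ z) (e 0) (e 0) := by
      rw [hcomp 1]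
      rw [ContinuousLinearMap.comp_apply, hΦ1]
      exact fderiv_eval _ _ hvd2 (e 0) (e 0)
    have h2 : fderiv ℝ (fun p => fderiv ℝ u p Complex.I) z Complex.I =
        fderiv ℝ (fderiv ℝ v) (y + Φ z) (e 1) (e 1) := by
      rw [hcomp Complex.I]
      rw [ContinuousLinearMap.comp_apply, hΦI]
      exact fderiv_eval _ _ hvd2 (e 1) (e 1)
    have hlv := hharm _ hx
    rw [lap, Fin.sum_univ_two] at hlv
    have hpd : ∀ i : Fin 2, pd i (pd i v) (y + Φ z) =
        fderiv ℝ (fderiv ℝ v) (y + Φ z) (e i) (e i) := by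
      intro i
      rw [pd]
      rw [show pd i v = (fun q : R2 => fderiv ℝ v q (e i)) from rfl]
      exact fderiv_eval _ _ hvd2 (e i) (e i)
    rw [hpd 0, hpd 1] at hlv
    rw [h1, h2]
    exact hlv
  -- bound on the derivative of u at the boundary point
  set c₀ : ℂ := A.symm (z₀ - y) with hc₀def
  have hc₀Φ : y + Φ c₀ = z₀ := by
    rw [hΦA, hc₀def]
    simp
  have hc₀n : ‖c₀‖ = d := by
    rw [hc₀def, A.symm.norm_map, hz₀]
  have hp0 : |fderiv ℝ v z₀ (e 0)| ≤ ‖grad v z₀‖ * 1 → True := fun _ => trivial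
  -- pointwise bound |Dv w| ≤ ‖grad‖ ‖w‖
  have hgcoord : ∀ w : R2, w = w 0 • e 0 + w 1 • e 1 := by
    intro w
    ext j
    fin_cases j <;>
      simp [e, EuclideanSpace.single_apply, PiLp.add_apply, PiLp.smul_apply, smul_eq_mul]
  have hfw : ∀ w : R2, fderiv ℝ v z₀ w =
      fderiv ℝ v z₀ (e 0) * w 0 + fderiv ℝ v z₀ (e 1) * w 1 := by
    intro w
    conv_lhs => rw [hgcoord w]
    rw [map_add, _root_.map_smul, _root_.map_smul]
    simp [smul_eq_mul, mul_comm]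
  have hwn : ∀ w : R2, ‖w‖^2 = (w 0)^2 + (w 1)^2 := by
    intro w
    rw [EuclideanSpace.norm_eq]
    rw [Real.sq_sqrt (by positivity)]
    rw [Fin.sum_univ_two]
    simp [sq_abs]
  have hgradn : ‖grad v z₀‖^2 = (fderiv ℝ v z₀ (e 0))^2 + (fderiv ℝ v z₀ (e 1))^2 := by
    rw [hwn]
    have hg0 : grad v z₀ 0 = fderiv ℝ v z₀ (e 0) := by
      rw [grad, Fin.sum_univ_two]
      simp [pd, e, EuclideanSpace.single_apply, PiLp.add_apply, PiLp.smul_apply, smul_eq_mul]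
    have hg1 : grad v z₀ 1 = fderiv ℝ v z₀ (e 1) := by
      rw [grad, Fin.sum_univ_two]
      simp [pd, e, EuclideanSpace.single_apply, PiLp.add_apply, PiLp.smul_apply, smul_eq_mul]
    rw [hg0, hg1]
  have hDv : ∀ w : R2, |fderiv ℝ v z₀ w| ≤ ‖w‖ := by
    intro w
    have hcs : (fderiv ℝ v z₀ w)^2 ≤ ‖grad v z₀‖^2 * ‖w‖^2 := by
      rw [hfw, hgradn, hwn]
      nlinarith [sq_nonneg (fderiv ℝ v z₀ (e 0) * w 1 - fderiv ℝ v z₀ (e 1) * w 0)]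
    have hg1 : ‖grad v z₀‖^2 ≤ 1 := by nlinarith [norm_nonneg (grad v z₀)]
    have : (fderiv ℝ v z₀ w)^2 ≤ ‖w‖^2 := by nlinarith [sq_nonneg ‖w‖]
    nlinarith [abs_nonneg (fderiv ℝ v z₀ w), norm_nonneg w, sq_abs (fderiv ℝ v z₀ w)]
  set D : ℂ →L[ℝ] ℝ := (fderiv ℝ v z₀).comp Φ with hDdef
  have hDu : HasFDerivAt u D c₀ := by
    have h1 : HasFDerivAt v (fderiv ℝ v z₀) (y + Φ c₀) := by
      rw [hc₀Φ]; exact hdiff.hasFDerivAt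
    exact h1.comp c₀ (hφd c₀)
  have hDb : ∀ w : ℂ, |D w| ≤ ‖w‖ := by
    intro w
    rw [hDdef, ContinuousLinearMap.comp_apply]
    calc |fderiv ℝ v z₀ (Φ w)| ≤ ‖Φ w‖ := hDv (Φ w)
      _ = ‖w‖ := hΦnorm w
  -- little-o argument
  have hlo := hDu.isLittleO
  rw [Asymptotics.isLittleO_iff] at hlo
  have hev := hlo (c := 1/2) (by norm_num)
  rw [Metric.eventually_nhds_iff] at hev
  obtain ⟨ρ, hρ, hball⟩ := hev
  set t : ℝ := min (ρ/2) (d/2) with htdef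
  have ht0 : 0 < t := lt_min (by positivity) (by positivity)
  have htd : t < d := lt_of_le_of_lt (min_le_right _ _) (by linarith)
  have htρ : t < ρ := lt_of_le_of_lt (min_le_left _ _) (by linarith)
  set xt : ℂ := (1 - t/d) • c₀ with hxtdef
  have hxtsub : xt - c₀ = (-(t/d)) • c₀ := by
    rw [hxtdef, sub_smul, one_smul, neg_smul]
    abel
  have hxtnorm : ‖xt - c₀‖ = t := by
    rw [hxtsub, norm_smul, hc₀n]
    rw [Real.norm_eq_abs, abs_neg, abs_div, abs_of_pos ht0, abs_of_pos hd]
    field_simp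
  have hxtn : ‖xt‖ = d - t := by
    rw [hxtdef, norm_smul, hc₀n, Real.norm_eq_abs]
    rw [abs_of_pos (by rw [sub_pos, div_lt_one hd]; exact htd : (0:ℝ) < 1 - t/d)]
    field_simp
  have hxtball : xt ∈ Metric.ball (0:ℂ) d := by
    rw [Metric.mem_ball, dist_zero_right, hxtn]
    linarith
  have huc₀ : u c₀ = 0 := by rw [hudef]; simp only []; rw [hc₀Φ]; exact hv0
  have hut : u xt ≤ 3/2 * t := by
    have h1 := hball (y := xt) (by rw [dist_eq_norm, hxtnorm]; exact htρ)
    rw [huc₀] at h1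
    have h2 : |D (xt - c₀)| ≤ t := by
      calc |D (xt - c₀)| ≤ ‖xt - c₀‖ := hDb _
        _ = t := hxtnorm
    rw [hxtnorm] at h1
    rw [Real.norm_eq_abs] at h1
    have h3 : u xt - 0 - D (xt - c₀) ≤ 1/2 * t := le_trans (le_abs_self _) h1
    cases' abs_le.mp h2 with h2a h2b
    linarith
  have har := complex_side hd hu hlapu hnnu hxtball
  rw [hxtn] at har
  have hu0 : u 0 = v y := by rw [hudef]; simp
  rw [hu0] at har
  -- (d - (d - t)) * v y ≤ (d + (d - t)) * u xt
  have h4 : t * v y ≤ (2*d - t) * (3/2 * t) := by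
    have h5 : (d + (d - t)) * u xt ≤ (d + (d-t)) * (3/2 * t) :=
      mul_le_mul_of_nonneg_left hut (by linarith)
    nlinarith [har]
  nlinarith [h4, ht0]
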